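/- Let F be a hereditary family of graphs with the strong Erdős–Hajnal property with constant c, and let t be a positive integer. Then every graph G∈F on n ≥ c^{-t} vertices contains 2^t pairwise disjoint vertex subsets, each of size at least c^t n, such that between every pair of these subsets the bipartite graph is complete or empty. -/
import Mathlib


/-- A family of finite simple graphs, given as a predicate on graphs over every finite
vertex type. -/
abbrev GraphFamily : Type 1 := ∀ (V : Type) [Fintype V], SimpleGraph V → Prop

/-- A family of graphs is hereditary if it is closed under taking induced subgraphs. -/
def Hereditary (F : GraphFamily) : Prop :=
  ∀ (V : Type) [Fintype V] (G : SimpleGraph V), F V G →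
    ∀ (s : Set V) [Fintype ↥s], F ↥s (G.induce s)

/-- The bipartite graph between `A` and `B` is complete or empty. -/
def HomogPair {V : Type} (G : SimpleGraph V) (A B : Finset V) : Prop :=
  (∀ a ∈ A, ∀ b ∈ B, G.Adj a b) ∨ (∀ a ∈ A, ∀ b ∈ B, ¬ G.Adj a b)

/-- The number of (ordered) adjacent pairs between `A` and `B`. -/
noncomputable def crossCount {V : Type} (G : SimpleGraph V) (A B : Finset V) : ℕ :=
  {p : V × V | p.1 ∈ A ∧ p.2 ∈ B ∧ G.Adj p.1 p.2}.ncard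

/-- The mighty Erdős–Hajnal property: there is `c > 0` such that for every graph in the family
and all disjoint vertex subsets `A, B` of equal size, there are `A' ⊆ A`, `B' ⊆ B` with
`|A'| ≥ c|A|`, `|B'| ≥ c|B|` that are complete or empty to each other. -/
def MightyEH (F : GraphFamily) : Prop :=
  ∃ c : ℝ, 0 < c ∧
    ∀ (V : Type) [Fintype V] (G : SimpleGraph V), F V G →
      ∀ A B : Finset V, Disjoint A B → A.card = B.card →
        ∃ A' ⊆ A, ∃ B' ⊆ B,
          c * A.card ≤ (A'.card : ℝ) ∧ c * B.card ≤ (B'.card : ℝ) ∧ HomogPair G A' B'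

/-- The homogeneous regularity property: for every `ε > 0` there is `K` such that every graph
in the family has an equipartition into `K` parts such that all but at most `ε K²` pairs of
distinct parts are complete or empty to each other. -/
def HomogReg (F : GraphFamily) : Prop :=
  ∀ ε : ℝ, 0 < ε → ∃ K : ℕ, 0 < K ∧
    ∀ (V : Type) [Fintype V] (G : SimpleGraph V), F V G →
      ∃ P : Fin K → Finset V,
        (∀ i j, i ≠ j → Disjoint (P i) (P j)) ∧
        (∀ v : V, ∃ i, v ∈ P i) ∧
        (∀ i j, (P i).card ≤ (P j).card + 1) ∧
        ({p : Fin K × Fin K | p.1 ≠ p.2 ∧ ¬ HomogPair G (P p.1) (P p.2)}.ncard : ℝ)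
          ≤ ε * K ^ 2

/-- The homogeneous density property: for every `ε > 0` there is `C = C(ε)` such that for every
graph in the family and disjoint equal-size subsets `A, B` with at least `ε|A||B|` edges between
them, there are `A' ⊆ A`, `B' ⊆ B` of sizes at least `ε^C |A|`, `ε^C |B|` that are complete to
each other. -/
def HomogDensity (F : GraphFamily) : Prop :=
  ∀ ε : ℝ, 0 < ε → ε ≤ 1 → ∃ C : ℝ, 0 < C ∧
    ∀ (V : Type) [Fintype V] (G : SimpleGraph V), F V G →
      ∀ A B : Finset V, Disjoint A B → A.card = B.card →
        ε * A.card * B.card ≤ (crossCount G A B : ℝ) →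
        ∃ A' ⊆ A, ∃ B' ⊆ B,
          ε ^ C * A.card ≤ (A'.card : ℝ) ∧ ε ^ C * B.card ≤ (B'.card : ℝ) ∧
          ∀ a ∈ A', ∀ b ∈ B', G.Adj a b

/-- The family of complements of graphs in `F`. -/
def ComplFamily (F : GraphFamily) : GraphFamily :=
  fun V inst G => @F V inst Gᶜ

/-- Iterated strong Erdős–Hajnal: if a hereditary family `F` has the strong Erdős–Hajnal
property with constant `c`, and `G ∈ F` has `n ≥ c^{-t}` vertices, then `G` contains `2^t`
pairwise disjoint vertex subsets, each of size at least `c^t n`, such that between every pair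
of these subsets the bipartite graph is complete or empty. -/
lemma homogPair_mono {V : Type} {G : SimpleGraph V} {A B A' B' : Finset V}
    (h : HomogPair G A B) (hA : A' ⊆ A) (hB : B' ⊆ B) : HomogPair G A' B' := by
  rcases h with h | h
  · exact Or.inl fun a ha b hb => h a (hA ha) b (hB hb)
  · exact Or.inr fun a ha b hb => h a (hA ha) b (hB hb)

lemma homogPair_symm {V : Type} {G : SimpleGraph V} {A B : Finset V}
    (h : HomogPair G A B) : HomogPair G B A := by
  rcases h with h | h
  · exact Or.inl fun b hb a ha => (h a ha b hb).symm
  · exact Or.inr fun b hb a ha => fun hadj => h a ha b hb hadj.symm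

lemma homogPair_map {V : Type} (G : SimpleGraph V) (s : Set V) (P Q : Finset ↥s)
    (h : HomogPair (G.induce s) P Q) :
    HomogPair G (P.map ⟨Subtype.val, Subtype.val_injective⟩)
      (Q.map ⟨Subtype.val, Subtype.val_injective⟩) := by
  rcases h with h | h
  · left
    intro a ha b hb
    simp only [Finset.mem_map, Function.Embedding.coeFn_mk] at ha hb
    obtain ⟨a', ha', rfl⟩ := ha
    obtain ⟨b', hb', rfl⟩ := hb
    exact h a' ha' b' hb'
  · right
    intro a ha b hb
    simp only [Finset.mem_map, Function.Embedding.coeFn_mk] at ha hb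
    obtain ⟨a', ha', rfl⟩ := ha
    obtain ⟨b', hb', rfl⟩ := hb
    exact h a' ha' b' hb'

lemma stmt11_aux (F : GraphFamily) (hF : Hereditary F) (c : ℝ) (hc0 : 0 < c) (hc1 : c ≤ 1 / 2)
    (hSEH : ∀ (V : Type) [Fintype V] (G : SimpleGraph V), F V G → 2 ≤ Fintype.card V →
      ∃ A B : Finset V, Disjoint A B ∧
        c * Fintype.card V ≤ (A.card : ℝ) ∧ c * Fintype.card V ≤ (B.card : ℝ) ∧
        HomogPair G A B) :
    ∀ (t : ℕ) (V : Type) [Fintype V] (G : SimpleGraph V), F V G →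
      (c ^ t)⁻¹ ≤ (Fintype.card V : ℝ) →
      ∃ P : Fin (2 ^ t) → Finset V,
        (∀ i j, i ≠ j → Disjoint (P i) (P j)) ∧
        (∀ i, c ^ t * Fintype.card V ≤ ((P i).card : ℝ)) ∧
        (∀ i j, i ≠ j → HomogPair G (P i) (P j)) := by
  have hc1' : c ≤ 1 := hc1.trans (by norm_num)
  intro t
  induction t with
  | zero =>
    intro V _ G _ _
    refine ⟨fun _ => Finset.univ, ?_, ?_, ?_⟩
    · intro i j hij
      have hi : (i:ℕ) < 1 := by simpa using i.2
      have hj : (j:ℕ) < 1 := by simpa using j.2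
      exact absurd (Fin.ext (by omega)) hij
    · intro i; simp
    · intro i j hij
      have hi : (i:ℕ) < 1 := by simpa using i.2
      have hj : (j:ℕ) < 1 := by simpa using j.2
      exact absurd (Fin.ext (by omega)) hij
  | succ t IH =>
    intro V _ G hG hn
    have hpowpos : (0:ℝ) < c ^ (t+1) := pow_pos hc0 _
    have hpow : c ^ (t + 1) ≤ 1 / 2 := by
      calc c ^ (t+1) ≤ c ^ 1 := pow_le_pow_of_le_one hc0.le hc1' (by omega)
        _ = c := pow_one c
        _ ≤ 1 / 2 := hc1
    have hn2 : 2 ≤ Fintype.card V := by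
      have h2 : (2:ℝ) ≤ (c ^ (t+1))⁻¹ := by
        have := inv_anti₀ hpowpos hpow
        simpa using this
      exact_mod_cast h2.trans hn
    obtain ⟨A, B, hAB, hA, hB, hhom⟩ := hSEH V G hG hn2
    -- key inequality
    have hkey : (c ^ t)⁻¹ ≤ c * (Fintype.card V : ℝ) := by
      have h1 : (c ^ t)⁻¹ = c * (c ^ (t+1))⁻¹ := by
        rw [pow_succ, mul_inv, ← mul_assoc, mul_comm c (c ^ t)⁻¹, mul_assoc,
          mul_inv_cancel₀ hc0.ne', mul_one]
      rw [h1]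
      exact mul_le_mul_of_nonneg_left hn hc0.le
    have cardA : Fintype.card ↥(↑A : Set V) = A.card := by simp
    have cardB : Fintype.card ↥(↑B : Set V) = B.card := by simp
    obtain ⟨PA, hPAd, hPAc, hPAh⟩ := IH ↥(↑A : Set V) (G.induce ↑A)
      (hF V G hG ↑A) (by rw [cardA]; exact hkey.trans hA)
    obtain ⟨PB, hPBd, hPBc, hPBh⟩ := IH ↥(↑B : Set V) (G.induce ↑B)
      (hF V G hG ↑B) (by rw [cardB]; exact hkey.trans hB)
    have hsplit : ∀ i : Fin (2 ^ (t+1)), ¬ ((i : ℕ) < 2 ^ t) → (i : ℕ) - 2 ^ t < 2 ^ t := by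
      intro i hi
      have h2 : (i : ℕ) < 2 ^ t * 2 := by rw [← pow_succ]; exact i.2
      omega
    set emA : ↥(↑A : Set V) ↪ V := ⟨Subtype.val, Subtype.val_injective⟩ with hemA
    set emB : ↥(↑B : Set V) ↪ V := ⟨Subtype.val, Subtype.val_injective⟩ with hemB
    set Q : Fin (2 ^ (t+1)) → Finset V := fun i =>
      if h : (i : ℕ) < 2 ^ t then (PA ⟨i, h⟩).map emA
      else (PB ⟨(i : ℕ) - 2 ^ t, hsplit i h⟩).map emB with hQ
    have hsubA : ∀ (k : Fin (2 ^ t)), (PA k).map emA ⊆ A := by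
      intro k x hx
      simp only [Finset.mem_map, hemA, Function.Embedding.coeFn_mk] at hx
      obtain ⟨a, _, rfl⟩ := hx
      exact a.2
    have hsubB : ∀ (k : Fin (2 ^ t)), (PB k).map emB ⊆ B := by
      intro k x hx
      simp only [Finset.mem_map, hemB, Function.Embedding.coeFn_mk] at hx
      obtain ⟨a, _, rfl⟩ := hx
      exact a.2
    refine ⟨Q, ?_, ?_, ?_⟩
    · intro i j hij
      have hij' : (i : ℕ) ≠ (j : ℕ) := fun h => hij (Fin.ext h)
      simp only [hQ]
      by_cases hi : (i : ℕ) < 2 ^ t <;> by_cases hj : (j : ℕ) < 2 ^ t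
      · rw [dif_pos hi, dif_pos hj, Finset.disjoint_map]
        exact hPAd _ _ (by simp [Fin.ext_iff, hij'])
      · rw [dif_pos hi, dif_neg hj]
        exact (hAB.mono (hsubA _) (hsubB _))
      · rw [dif_neg hi, dif_pos hj]
        exact ((hAB.symm).mono (hsubB _) (hsubA _))
      · rw [dif_neg hi, dif_neg hj, Finset.disjoint_map]
        exact hPBd _ _ (by simp only [ne_eq, Fin.mk.injEq]; omega)
    · intro i
      simp only [hQ]
      by_cases hi : (i : ℕ) < 2 ^ t
      · rw [dif_pos hi, Finset.card_map]
        calc c ^ (t+1) * (Fintype.card V : ℝ) = c ^ t * (c * Fintype.card V) := by ring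
          _ ≤ c ^ t * A.card :=
            mul_le_mul_of_nonneg_left hA (pow_nonneg hc0.le t)
          _ = c ^ t * Fintype.card ↥(↑A : Set V) := by rw [cardA]
          _ ≤ _ := hPAc _
      · rw [dif_neg hi, Finset.card_map]
        calc c ^ (t+1) * (Fintype.card V : ℝ) = c ^ t * (c * Fintype.card V) := by ring
          _ ≤ c ^ t * B.card :=
            mul_le_mul_of_nonneg_left hB (pow_nonneg hc0.le t)
          _ = c ^ t * Fintype.card ↥(↑B : Set V) := by rw [cardB]
          _ ≤ _ := hPBc _
    · intro i j hij
      have hij' : (i : ℕ) ≠ (j : ℕ) := fun h => hij (Fin.ext h)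
      simp only [hQ]
      by_cases hi : (i : ℕ) < 2 ^ t <;> by_cases hj : (j : ℕ) < 2 ^ t
      · rw [dif_pos hi, dif_pos hj]
        exact homogPair_map G _ _ _ (hPAh _ _ (by simp [Fin.ext_iff, hij']))
      · rw [dif_pos hi, dif_neg hj]
        exact homogPair_mono hhom (hsubA _) (hsubB _)
      · rw [dif_neg hi, dif_pos hj]
        exact homogPair_mono (homogPair_symm hhom) (hsubB _) (hsubA _)
      · rw [dif_neg hi, dif_neg hj]
        exact homogPair_map G _ _ _ (hPBh _ _ (by simp only [ne_eq, Fin.mk.injEq]; omega))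

theorem stmt11 (F : GraphFamily) (hF : Hereditary F) (c : ℝ) (hc0 : 0 < c) (hc1 : c ≤ 1 / 2)
    (hSEH : ∀ (V : Type) [Fintype V] (G : SimpleGraph V), F V G → 2 ≤ Fintype.card V →
      ∃ A B : Finset V, Disjoint A B ∧
        c * Fintype.card V ≤ (A.card : ℝ) ∧ c * Fintype.card V ≤ (B.card : ℝ) ∧
        HomogPair G A B)
    (t : ℕ) (ht : 0 < t)
    (V : Type) [Fintype V] (G : SimpleGraph V) (hG : F V G)
    (hn : (c ^ t)⁻¹ ≤ (Fintype.card V : ℝ)) :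
    ∃ P : Fin (2 ^ t) → Finset V,
      (∀ i j, i ≠ j → Disjoint (P i) (P j)) ∧
      (∀ i, c ^ t * Fintype.card V ≤ ((P i).card : ℝ)) ∧
      (∀ i j, i ≠ j → HomogPair G (P i) (P j)) := by
  exact stmt11_aux F hF c hc0 hc1 hSEH t V G hG hn
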